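/- Let A be an n×n matrix over ℝ∪{−∞} with max-plus spectral radius λ > −∞, let h ∈ ℝⁿ be regular, and let g ∈ (ℝ∪{−∞})ⁿ with g_i ≤ h_i for all i. Then the minimum over all x ∈ ℝⁿ satisfying g_i ≤ x_i ≤ h_i for all i of G(x) = max_{1≤i,j≤n}(A_{ij} + x_j − x_i) equals θ = max( λ , max_{1≤m≤n} (1/m)·max_{1≤i,j≤n}( (A^m)_{ij} + g_j − h_i ) ), and this minimum is attained by some feasible x. -/

import Mathlib

/-!
Max-plus semifield modeled as `WithBot ℝ` (= ℝ ∪ {−∞}); `⊔` is max-plus addition.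
The minimum value is θ = max(λ, max_{1≤m≤n} (1/m)·max_{i,j}((A^m)_{ij} + g_j − h_i)),
where λ is the max-plus spectral radius of A.
-/

/-- Max-plus matrix product: (A⊗B)_{ij} = max_k (A_{ik} + B_{kj}). -/
noncomputable def mmul {n : ℕ} (A B : Fin n → Fin n → WithBot ℝ) :
    Fin n → Fin n → WithBot ℝ :=
  fun i j => Finset.univ.sup fun k => A i k + B k j

/-- Max-plus matrix powers, with A⁰ = I (0 on the diagonal, −∞ elsewhere). -/
noncomputable def mpow {n : ℕ} (A : Fin n → Fin n → WithBot ℝ) :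
    ℕ → Fin n → Fin n → WithBot ℝ
  | 0 => fun i j => if i = j then (0 : WithBot ℝ) else ⊥
  | m + 1 => mmul (mpow A m) A

/-- Kleene star: (A*)_{ij} = max_{0 ≤ m ≤ n−1} (A^m)_{ij}. -/
noncomputable def mstar {n : ℕ} (A : Fin n → Fin n → WithBot ℝ) :
    Fin n → Fin n → WithBot ℝ :=
  fun i j => (Finset.range n).sup fun m => mpow A m i j

/-- Max-plus spectral radius (maximum cycle mean):
λ = max_{1 ≤ m ≤ n} (1/m)·max_i (A^m)_{ii}, computed in ℝ ∪ {−∞}. -/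
noncomputable def specRad {n : ℕ} (A : Fin n → Fin n → WithBot ℝ) : WithBot ℝ :=
  (Finset.Icc 1 n).sup fun m =>
    WithBot.map (fun r => r / (m : ℝ)) (Finset.univ.sup fun i => mpow A m i i)

namespace MaxPlusAux

variable {α : Type*}

lemma sup_add (s : Finset α) (f : α → WithBot ℝ) (a : WithBot ℝ) (hs : s.Nonempty) :
    s.sup f + a = s.sup (fun k => f k + a) := by
  apply le_antisymm
  · obtain ⟨b, hb, hbe⟩ := Finset.exists_mem_eq_sup s hs f
    rw [hbe]
    exact Finset.le_sup (f := fun k => f k + a) hb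
  · exact Finset.sup_le fun k hk => add_le_add (Finset.le_sup hk) le_rfl

lemma add_sup (s : Finset α) (f : α → WithBot ℝ) (a : WithBot ℝ) (hs : s.Nonempty) :
    a + s.sup f = s.sup (fun k => a + f k) := by
  apply le_antisymm
  · obtain ⟨b, hb, hbe⟩ := Finset.exists_mem_eq_sup s hs f
    rw [hbe]
    exact Finset.le_sup (f := fun k => a + f k) hb
  · exact Finset.sup_le fun k hk => add_le_add le_rfl (Finset.le_sup hk)

lemma add_max (a b c : WithBot ℝ) : a + (b ⊔ c) = (a + b) ⊔ (a + c) := by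
  rcases le_total b c with hbc | hbc
  · rw [sup_eq_right.2 hbc, sup_eq_right.2 (add_le_add le_rfl hbc)]
  · rw [sup_eq_left.2 hbc, sup_eq_left.2 (add_le_add le_rfl hbc)]

lemma cancel_left {a b : ℝ} {w : WithBot ℝ} (hw : (a : WithBot ℝ) + w ≤ (b : ℝ)) :
    w ≤ ((b - a : ℝ) : WithBot ℝ) := by
  cases w with
  | bot => exact bot_le
  | coe x =>
    rw [← WithBot.coe_add, WithBot.coe_le_coe] at hw
    exact WithBot.coe_le_coe.2 (by linarith)

lemma cancel_right {a b : ℝ} {w : WithBot ℝ} (hw : w + (a : WithBot ℝ) ≤ (b : ℝ)) :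
    w ≤ ((b - a : ℝ) : WithBot ℝ) := by
  rw [add_comm] at hw; exact cancel_left hw

lemma add_neg_le_zero {r : ℝ} {w : WithBot ℝ} (hw : w ≤ (r : ℝ)) :
    w + ((-r : ℝ) : WithBot ℝ) ≤ 0 := by
  cases w with
  | bot => simpa using bot_le (α := WithBot ℝ)
  | coe x =>
    rw [WithBot.coe_le_coe] at hw
    rw [← WithBot.coe_add, show (0 : WithBot ℝ) = ((0 : ℝ) : WithBot ℝ) from rfl,
      WithBot.coe_le_coe]
    linarith

lemma add_ne_bot {a b : WithBot ℝ} (h : a + b ≠ ⊥) : a ≠ ⊥ ∧ b ≠ ⊥ := by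
  constructor
  · rintro rfl; exact h (WithBot.bot_add b)
  · rintro rfl; exact h (WithBot.add_bot a)

lemma coe_unbot' {w : WithBot ℝ} (hw : w ≠ ⊥) : ((w.unbotD 0 : ℝ) : WithBot ℝ) = w := by
  cases w with
  | bot => exact absurd rfl hw
  | coe x => rfl

lemma le_coe_inf' {s : Finset α} (hs : s.Nonempty) (f : α → ℝ) {w : WithBot ℝ}
    (hw : ∀ k ∈ s, w ≤ ((f k : ℝ) : WithBot ℝ)) : w ≤ ((s.inf' hs f : ℝ) : WithBot ℝ) := by
  cases w with
  | bot => exact bot_le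
  | coe x =>
    rw [WithBot.coe_le_coe]
    exact Finset.le_inf' hs f fun k hk => WithBot.coe_le_coe.1 (hw k hk)

lemma div_bound_of {m : ℕ} (hm : 1 ≤ m) {s : WithBot ℝ} {c : ℝ}
    (hs : s ≤ (((m : ℝ) * c : ℝ) : WithBot ℝ)) :
    WithBot.map (fun r => r / (m : ℝ)) s ≤ ((c : ℝ) : WithBot ℝ) := by
  cases s with
  | bot => exact bot_le
  | coe x =>
    rw [WithBot.map_coe, WithBot.coe_le_coe]
    rw [WithBot.coe_le_coe] at hs
    have hm' : (0 : ℝ) < m := by exact_mod_cast hm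
    rw [div_le_iff₀ hm']
    linarith [hs]

lemma bound_of_div {m : ℕ} (hm : 1 ≤ m) {s : WithBot ℝ} {c : ℝ}
    (h : WithBot.map (fun r => r / (m : ℝ)) s ≤ ((c : ℝ) : WithBot ℝ)) :
    s ≤ (((m : ℝ) * c : ℝ) : WithBot ℝ) := by
  cases s with
  | bot => exact bot_le
  | coe x =>
    rw [WithBot.map_coe, WithBot.coe_le_coe] at h
    rw [WithBot.coe_le_coe]
    have hm' : (0 : ℝ) < m := by exact_mod_cast hm
    rw [div_le_iff₀ hm'] at h
    linarith [h]

variable {n : ℕ}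

lemma univ_ne (hn : 0 < n) : (Finset.univ : Finset (Fin n)).Nonempty :=
  ⟨⟨0, hn⟩, Finset.mem_univ _⟩

lemma mpow_one (A : Fin n → Fin n → WithBot ℝ) : mpow A 1 = A := by
  funext i j
  show (Finset.univ.sup fun k => mpow A 0 i k + A k j) = A i j
  apply le_antisymm
  · apply Finset.sup_le
    intro k _
    show (if i = k then (0:WithBot ℝ) else ⊥) + A k j ≤ A i j
    by_cases hik : i = k
    · subst hik; simp
    · simp [hik]
  · have := Finset.le_sup (f := fun k => mpow A 0 i k + A k j) (Finset.mem_univ i)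
    simpa [mpow] using this

lemma mmul_assoc (hn : 0 < n) (X Y Z : Fin n → Fin n → WithBot ℝ) :
    mmul (mmul X Y) Z = mmul X (mmul Y Z) := by
  funext i j
  show (Finset.univ.sup fun k => (Finset.univ.sup fun l => X i l + Y l k) + Z k j)
      = Finset.univ.sup fun l => X i l + Finset.univ.sup fun k => Y l k + Z k j
  have hne := univ_ne hn
  calc (Finset.univ.sup fun k => (Finset.univ.sup fun l => X i l + Y l k) + Z k j)
      = Finset.univ.sup fun k => Finset.univ.sup fun l => (X i l + Y l k) + Z k j := by
        refine Finset.sup_congr rfl fun k _ => ?_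
        exact sup_add _ _ _ hne
    _ = Finset.univ.sup fun l => Finset.univ.sup fun k => (X i l + Y l k) + Z k j :=
        Finset.sup_comm _ _ _
    _ = Finset.univ.sup fun l => X i l + Finset.univ.sup fun k => Y l k + Z k j := by
        refine Finset.sup_congr rfl fun l _ => ?_
        rw [add_sup _ _ _ hne]
        refine Finset.sup_congr rfl fun k _ => ?_
        rw [add_assoc]

lemma mmul_id_right (A : Fin n → Fin n → WithBot ℝ) :
    mmul A (mpow A 0) = A := by
  funext i j
  show (Finset.univ.sup fun k => A i k + mpow A 0 k j) = A i j
  apply le_antisymm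
  · apply Finset.sup_le
    intro k _
    show A i k + (if k = j then (0:WithBot ℝ) else ⊥) ≤ A i j
    by_cases hkj : k = j
    · subst hkj; simp
    · simp [hkj]
  · have := Finset.le_sup (f := fun k => A i k + mpow A 0 k j) (Finset.mem_univ j)
    simpa [mpow] using this

lemma mpow_succ_left (hn : 0 < n) (A : Fin n → Fin n → WithBot ℝ) (m : ℕ) :
    mpow A (m + 1) = mmul A (mpow A m) := by
  induction m with
  | zero => show mpow A 1 = mmul A (mpow A 0); rw [mpow_one, mmul_id_right]
  | succ m ih =>
    show mmul (mpow A (m+1)) A = mmul A (mmul (mpow A m) A)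
    rw [ih, mmul_assoc hn]

/-- Path weight along `p` from step `a` to step `b`. -/
noncomputable def W (B : Fin n → Fin n → WithBot ℝ) (p : ℕ → Fin n) (a b : ℕ) : WithBot ℝ :=
  ∑ t ∈ Finset.Ico a b, B (p t) (p (t + 1))

lemma W_split (B : Fin n → Fin n → WithBot ℝ) (p : ℕ → Fin n) {a b c : ℕ}
    (hab : a ≤ b) (hbc : b ≤ c) : W B p a c = W B p a b + W B p b c := by
  unfold W
  rw [← Finset.sum_Ico_consecutive _ hab hbc]

lemma W_succ (B : Fin n → Fin n → WithBot ℝ) (p : ℕ → Fin n) {a b : ℕ} (hab : a ≤ b) :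
    W B p a (b + 1) = W B p a b + B (p b) (p (b + 1)) := by
  unfold W
  rw [Finset.sum_Ico_succ_top hab]

lemma W_le_mpow (B : Fin n → Fin n → WithBot ℝ) (p : ℕ → Fin n) (d a : ℕ) :
    W B p a (a + d) ≤ mpow B d (p a) (p (a + d)) := by
  induction d with
  | zero => simp [W, mpow]
  | succ d ih =>
    have h1 : W B p a (a + d + 1) = W B p a (a + d) + B (p (a + d)) (p (a + d + 1)) :=
      W_succ B p (Nat.le_add_right a d)
    show W B p a (a + (d+1)) ≤ mpow B (d+1) (p a) (p (a + (d+1)))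
    rw [show a + (d+1) = a + d + 1 from rfl, h1]
    calc W B p a (a + d) + B (p (a + d)) (p (a + d + 1))
        ≤ mpow B d (p a) (p (a + d)) + B (p (a + d)) (p (a + d + 1)) :=
          add_le_add ih le_rfl
      _ ≤ _ := Finset.le_sup (f := fun k => mpow B d (p a) k + B k (p (a+d+1)))
          (Finset.mem_univ (p (a+d)))

lemma mpow_le_W (hn : 0 < n) (B : Fin n → Fin n → WithBot ℝ) (m : ℕ) (i j : Fin n)
    (hne : mpow B m i j ≠ ⊥) :
    ∃ p : ℕ → Fin n, p 0 = i ∧ p m = j ∧ mpow B m i j ≤ W B p 0 m := by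
  induction m generalizing j with
  | zero =>
    have hij : i = j := by
      by_contra hij
      exact hne (by simp [mpow, hij])
    exact ⟨fun _ => i, rfl, hij ▸ rfl, by simp [mpow, hij, W]⟩
  | succ m ih =>
    obtain ⟨k, -, hk⟩ := Finset.exists_mem_eq_sup Finset.univ (univ_ne hn)
      (fun k => mpow B m i k + B k j)
    have hsup : mpow B (m+1) i j = mpow B m i k + B k j := hk
    have hmb : mpow B m i k ≠ ⊥ := (add_ne_bot (hsup ▸ hne)).1
    obtain ⟨p, hp0, hpm, hpW⟩ := ih k hmb
    refine ⟨fun t => if t ≤ m then p t else j, by simp [hp0], by simp, ?_⟩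
    have hWeq : W B (fun t => if t ≤ m then p t else j) 0 m = W B p 0 m := by
      unfold W
      refine Finset.sum_congr rfl fun t ht => ?_
      have htm : t < m := (Finset.mem_Ico.1 ht).2
      simp [Nat.le_of_lt htm, Nat.succ_le_of_lt htm]
    have : W B (fun t => if t ≤ m then p t else j) 0 (m+1)
        = W B p 0 m + B k j := by
      rw [W_succ _ _ (Nat.zero_le m), hWeq]
      simp [hpm]
    rw [this, hsup]
    exact add_le_add hpW le_rfl

lemma W_le_mstar (hn : 0 < n) (B : Fin n → Fin n → WithBot ℝ)
    (hcyc : ∀ d, 1 ≤ d → d ≤ n → ∀ q : Fin n, mpow B d q q ≤ 0)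
    (m : ℕ) (p : ℕ → Fin n) : W B p 0 m ≤ mstar B (p 0) (p m) := by
  induction m using Nat.strong_induction_on generalizing p with
  | _ m ih =>
    rcases lt_or_ge m n with hm | hm
    · calc W B p 0 m = W B p 0 (0 + m) := by rw [Nat.zero_add]
        _ ≤ mpow B m (p 0) (p (0 + m)) := W_le_mpow B p m 0
        _ ≤ mstar B (p 0) (p m) := by
            rw [Nat.zero_add]
            exact Finset.le_sup (f := fun k => mpow B k (p 0) (p m)) (Finset.mem_range.2 hm)
    · obtain ⟨a, ha, b, hb, hab, hpab⟩ :=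
        Finset.exists_ne_map_eq_of_card_lt_of_maps_to
          (s := Finset.range (n+1)) (t := (Finset.univ : Finset (Fin n)))
          (by simp) (fun a _ => Finset.mem_univ (p a))
      rw [Finset.mem_range] at ha hb
      wlog hlt : a < b generalizing a b
      · exact this b hb a ha (Ne.symm hab) hpab.symm (by omega)
      set d := b - a with hd
      have hd1 : 1 ≤ d := by omega
      have hdn : d ≤ n := by omega
      have hadb : a + d = b := by omega
      have hpb : p (a + d) = p a := by rw [hadb]; exact hpab.symm
      set q : ℕ → Fin n := fun t => if t ≤ a then p t else p (t + d) with hq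
      have hq_ge : ∀ t, a ≤ t → q t = p (t + d) := by
        intro t ht
        rcases eq_or_lt_of_le ht with rfl | h
        · simp only [hq, le_refl, if_pos]; rw [hpb]
        · simp [hq, Nat.not_le.2 h]
      have hq_le : ∀ t, t ≤ a → q t = p t := fun t ht => by simp [hq, ht]
      have hbm : b ≤ m := by omega
      have ham : a ≤ m - d := by omega
      have hcycle : W B p a b ≤ 0 := by
        calc W B p a b ≤ mpow B d (p a) (p a) := by
              rw [← hadb]; exact W_le_mpow B p d a |>.trans (by rw [hadb, hpab.symm])
          _ ≤ 0 := hcyc d hd1 hdn (p a)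
      have hsplit : W B p 0 m = W B p 0 a + W B p a b + W B p b m := by
        rw [W_split B p (Nat.zero_le b) hbm, W_split B p (Nat.zero_le a) (Nat.le_of_lt hlt)]
      have hq2 : W B q 0 a = W B p 0 a := by
        unfold W
        refine Finset.sum_congr rfl fun t ht => ?_
        have : t < a := (Finset.mem_Ico.1 ht).2
        rw [hq_le t (by omega), hq_le (t+1) (by omega)]
      have hq3 : W B q a (m - d) = W B p b m := by
        unfold W
        rw [Finset.sum_Ico_eq_sum_range, Finset.sum_Ico_eq_sum_range]
        have hcard : m - d - a = m - b := by omega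
        rw [hcard]
        refine Finset.sum_congr rfl fun t ht => ?_
        rw [hq_ge (a + t) (by omega), hq_ge (a + t + 1) (by omega)]
        congr 2 <;> omega
      have hqsplit : W B q 0 (m - d) = W B q 0 a + W B q a (m - d) :=
        W_split B q (Nat.zero_le a) ham
      have hle : W B p 0 m ≤ W B q 0 (m - d) := by
        rw [hsplit, hqsplit, hq2, hq3]
        calc W B p 0 a + W B p a b + W B p b m
            ≤ W B p 0 a + 0 + W B p b m := add_le_add (add_le_add le_rfl hcycle) le_rfl
          _ = W B p 0 a + W B p b m := by rw [add_zero]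
      have hq0 : q 0 = p 0 := hq_le 0 (Nat.zero_le a)
      have hqm : q (m - d) = p m := by
        rw [hq_ge (m - d) ham]; congr 1; omega
      calc W B p 0 m ≤ W B q 0 (m - d) := hle
        _ ≤ mstar B (q 0) (q (m - d)) := ih (m - d) (by omega) q
        _ = mstar B (p 0) (p m) := by rw [hq0, hqm]

lemma mpow_le_mstar (hn : 0 < n) (B : Fin n → Fin n → WithBot ℝ)
    (hcyc : ∀ d, 1 ≤ d → d ≤ n → ∀ q : Fin n, mpow B d q q ≤ 0)
    (m : ℕ) (i j : Fin n) : mpow B m i j ≤ mstar B i j := by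
  by_cases hb : mpow B m i j = ⊥
  · rw [hb]; exact bot_le
  · obtain ⟨p, hp0, hpm, hle⟩ := mpow_le_W hn B m i j hb
    calc mpow B m i j ≤ W B p 0 m := hle
      _ ≤ mstar B (p 0) (p m) := W_le_mstar hn B hcyc m p
      _ = mstar B i j := by rw [hp0, hpm]

lemma mpow_shift (hn : 0 < n) (A : Fin n → Fin n → WithBot ℝ) (t : ℝ) :
    ∀ m (i j : Fin n),
      mpow (fun a b => A a b + ((t : ℝ) : WithBot ℝ)) m i j
        = mpow A m i j + (((m : ℝ) * t : ℝ) : WithBot ℝ) := by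
  intro m
  induction m with
  | zero =>
    intro i j
    show (if i = j then (0:WithBot ℝ) else ⊥) = (if i = j then (0:WithBot ℝ) else ⊥) + _
    by_cases hij : i = j <;> simp [hij]
  | succ m ih =>
    intro i j
    show (Finset.univ.sup fun k =>
        mpow (fun a b => A a b + ((t:ℝ) : WithBot ℝ)) m i k + (A k j + ((t:ℝ) : WithBot ℝ)))
      = (Finset.univ.sup fun k => mpow A m i k + A k j) + _
    rw [sup_add _ _ _ (univ_ne hn)]
    refine Finset.sup_congr rfl fun k _ => ?_
    rw [ih i k]
    have : ((m:ℝ) + 1) * t = (m:ℝ) * t + t := by ring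
    push_cast [this]
    abel

end MaxPlusAux

/-- Boundary-constrained minimization of G(x) = max_{i,j}(A_{ij} + x_j − x_i) over
regular x with g ≤ x ≤ h: the minimum equals
θ = max(λ, max_{1≤m≤n} (1/m)·max_{i,j}((A^m)_{ij} + g_j − h_i)), and it is attained. -/
theorem stmt_18 {n : ℕ} (A : Fin n → Fin n → WithBot ℝ) (hlam : specRad A ≠ ⊥)
    (h : Fin n → ℝ) (g : Fin n → WithBot ℝ)
    (hgh : ∀ i, g i ≤ ((h i : ℝ) : WithBot ℝ)) :
    IsLeast
      {v | ∃ x : Fin n → ℝ,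
        (∀ i, g i ≤ ((x i : ℝ) : WithBot ℝ) ∧ x i ≤ h i) ∧
        (Finset.univ.sup fun i => Finset.univ.sup fun j =>
          A i j + ((x j - x i : ℝ) : WithBot ℝ)) = v}
      (specRad A ⊔
        (Finset.Icc 1 n).sup fun m =>
          WithBot.map (fun r => r / (m : ℝ))
            (Finset.univ.sup fun i => Finset.univ.sup fun j =>
              mpow A m i j + g j + ((-(h i) : ℝ) : WithBot ℝ))) := by
  classical
  open MaxPlusAux in
  -- n is positive
  have hn : 0 < n := by
    by_contra hn0
    push_neg at hn0
    apply hlam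
    unfold specRad
    rw [Finset.Icc_eq_empty (by omega), Finset.sup_empty]
  set D : WithBot ℝ := (Finset.Icc 1 n).sup (fun m =>
    WithBot.map (fun r => r / (m : ℝ))
      (Finset.univ.sup fun i => Finset.univ.sup fun j =>
        mpow A m i j + g j + ((-(h i) : ℝ) : WithBot ℝ))) with hD
  set θ : WithBot ℝ := specRad A ⊔ D with hθdef
  have hspec_le : specRad A ≤ θ := le_sup_left
  have hθne : θ ≠ ⊥ := fun hb => hlam (le_bot_iff.1 (hb ▸ hspec_le))
  obtain ⟨θ', hθ'⟩ := WithBot.ne_bot_iff_exists.1 hθne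
  -- basic bounds extracted from θ
  have T1 : ∀ m, 1 ≤ m → m ≤ n → ∀ i : Fin n,
      mpow A m i i ≤ (((m : ℝ) * θ' : ℝ) : WithBot ℝ) := by
    intro m hm1 hmn i
    have hs : (Finset.Icc 1 n).sup (fun m =>
        WithBot.map (fun r => r / (m : ℝ)) (Finset.univ.sup fun i => mpow A m i i)) ≤ θ :=
      hspec_le
    have h1 : WithBot.map (fun r => r / (m : ℝ)) (Finset.univ.sup fun i => mpow A m i i)
        ≤ ((θ' : ℝ) : WithBot ℝ) := by
      rw [hθ']
      exact le_trans (Finset.le_sup (f := fun (m : ℕ) => WithBot.map (fun r => r / (m : ℝ))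
        (Finset.univ.sup fun i => mpow A m i i)) (Finset.mem_Icc.2 ⟨hm1, hmn⟩)) hs
    exact le_trans (Finset.le_sup (f := fun i => mpow A m i i) (Finset.mem_univ i))
      (bound_of_div hm1 h1)
  have T2 : ∀ m, 1 ≤ m → m ≤ n → ∀ i j : Fin n,
      mpow A m i j + g j + ((-(h i) : ℝ) : WithBot ℝ) ≤ (((m : ℝ) * θ' : ℝ) : WithBot ℝ) := by
    intro m hm1 hmn i j
    have hs : D ≤ θ := le_sup_right
    have h1 : WithBot.map (fun r => r / (m : ℝ))
        (Finset.univ.sup fun i => Finset.univ.sup fun j =>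
          mpow A m i j + g j + ((-(h i) : ℝ) : WithBot ℝ)) ≤ ((θ' : ℝ) : WithBot ℝ) := by
      rw [hθ']
      rw [hD] at hs
      exact le_trans (Finset.le_sup (f := fun (m : ℕ) => WithBot.map (fun r => r / (m : ℝ))
        (Finset.univ.sup fun i => Finset.univ.sup fun j =>
          mpow A m i j + g j + ((-(h i) : ℝ) : WithBot ℝ))) (Finset.mem_Icc.2 ⟨hm1, hmn⟩)) hs
    have h2 := bound_of_div hm1 h1
    exact le_trans (le_trans (Finset.le_sup (f := fun j =>
        mpow A m i j + g j + ((-(h i) : ℝ) : WithBot ℝ)) (Finset.mem_univ j))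
      (Finset.le_sup (f := fun i => Finset.univ.sup fun j =>
        mpow A m i j + g j + ((-(h i) : ℝ) : WithBot ℝ)) (Finset.mem_univ i))) h2
  -- the normalized matrix B = A - θ
  set B : Fin n → Fin n → WithBot ℝ := fun a b => A a b + ((-θ' : ℝ) : WithBot ℝ) with hB
  have hBpow : ∀ m (i j : Fin n),
      mpow B m i j = mpow A m i j + (((m : ℝ) * (-θ') : ℝ) : WithBot ℝ) :=
    mpow_shift hn A (-θ')
  have hcyc : ∀ d, 1 ≤ d → d ≤ n → ∀ q : Fin n, mpow B d q q ≤ 0 := by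
    intro d hd1 hdn q
    rw [hBpow, show ((d : ℝ) * (-θ') : ℝ) = -((d : ℝ) * θ') from by ring]
    exact add_neg_le_zero (T1 d hd1 hdn q)
  -- properties of the Kleene star of B
  have hS0 : ∀ i, (0 : WithBot ℝ) ≤ mstar B i i := by
    intro i
    have h0 : mpow B 0 i i = 0 := by simp [mpow]
    calc (0 : WithBot ℝ) = mpow B 0 i i := h0.symm
      _ ≤ mstar B i i := Finset.le_sup (f := fun m => mpow B m i i) (Finset.mem_range.2 hn)
  have hSne : ∀ i, mstar B i i ≠ ⊥ := by
    intro i hb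
    have := hS0 i
    rw [hb, le_bot_iff] at this
    exact (by simp : (0 : WithBot ℝ) ≠ ⊥) this
  have hSK : ∀ m (i j : Fin n), mpow B m i j ≤ mstar B i j := mpow_le_mstar hn B hcyc
  have hF : ∀ k i j : Fin n, mstar B k i + B i j ≤ mstar B k j := by
    intro k i j
    show ((Finset.range n).sup fun m => mpow B m k i) + B i j ≤ _
    rw [sup_add _ _ _ ⟨0, Finset.mem_range.2 hn⟩]
    apply Finset.sup_le
    intro m _
    calc mpow B m k i + B i j
        ≤ mpow B (m+1) k j :=
          Finset.le_sup (f := fun l => mpow B m k l + B l j) (Finset.mem_univ i)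
      _ ≤ mstar B k j := hSK _ _ _
  have hF' : ∀ i j k : Fin n, B i j + mstar B j k ≤ mstar B i k := by
    intro i j k
    show B i j + ((Finset.range n).sup fun m => mpow B m j k) ≤ _
    rw [add_sup _ _ _ ⟨0, Finset.mem_range.2 hn⟩]
    apply Finset.sup_le
    intro m _
    calc B i j + mpow B m j k
        ≤ mpow B (m+1) i k := by
          rw [mpow_succ_left hn]
          exact Finset.le_sup (f := fun l => B i l + mpow B m l k) (Finset.mem_univ j)
      _ ≤ mstar B i k := hSK _ _ _
  -- the vector z (residuated from h)
  set F : Fin n → Finset (Fin n) := fun i => Finset.univ.filter (fun k => mstar B k i ≠ ⊥)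
    with hFdef
  have hFne : ∀ i, (F i).Nonempty := fun i =>
    ⟨i, by simp only [hFdef, Finset.mem_filter]; exact ⟨Finset.mem_univ i, hSne i⟩⟩
  set z : Fin n → ℝ := fun i => (F i).inf' (hFne i) (fun k => h k - (mstar B k i).unbotD 0)
    with hz
  have hzub : ∀ i, 0 ≤ (mstar B i i).unbotD 0 := by
    intro i
    have h0 := hS0 i
    cases hSw : mstar B i i with
    | bot => exact absurd hSw (hSne i)
    | coe s =>
      rw [hSw, show (0 : WithBot ℝ) = ((0 : ℝ) : WithBot ℝ) from rfl, WithBot.coe_le_coe] at h0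
      simpa using h0
  have hz1 : ∀ i, z i ≤ h i := by
    intro i
    have hmem : i ∈ F i := by
      simp only [hFdef, Finset.mem_filter]; exact ⟨Finset.mem_univ i, hSne i⟩
    have h1 : z i ≤ h i - (mstar B i i).unbotD 0 := by
      simp only [hz]
      exact Finset.inf'_le _ hmem
    linarith [hzub i]
  have hz2 : ∀ i k, mstar B k i + ((z i : ℝ) : WithBot ℝ) ≤ ((h k : ℝ) : WithBot ℝ) := by
    intro i k
    cases hSw : mstar B k i with
    | bot => rw [WithBot.bot_add]; exact bot_le
    | coe s =>
      have hmem : k ∈ F i := by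
        simp only [hFdef, Finset.mem_filter]
        exact ⟨Finset.mem_univ k, by rw [hSw]; exact WithBot.coe_ne_bot⟩
      have hle : z i ≤ h k - (mstar B k i).unbotD 0 := by
        simp only [hz]
        exact Finset.inf'_le _ hmem
      rw [hSw] at hle
      simp only [WithBot.unbotD_coe] at hle
      rw [← WithBot.coe_add, WithBot.coe_le_coe]
      linarith
  have hz3 : ∀ i j, B i j + ((z j : ℝ) : WithBot ℝ) ≤ ((z i : ℝ) : WithBot ℝ) := by
    intro i j
    have hgoal : ∀ k ∈ F i, B i j + ((z j : ℝ) : WithBot ℝ)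
        ≤ (((h k - (mstar B k i).unbotD 0 : ℝ)) : WithBot ℝ) := by
      intro k hk
      have hkne : mstar B k i ≠ ⊥ := by
        simp only [hFdef, Finset.mem_filter] at hk
        exact hk.2
      have hcoe : (((mstar B k i).unbotD 0 : ℝ) : WithBot ℝ) = mstar B k i := coe_unbot' hkne
      apply cancel_left (a := (mstar B k i).unbotD 0)
      rw [hcoe]
      calc mstar B k i + (B i j + ((z j : ℝ) : WithBot ℝ))
          = (mstar B k i + B i j) + ((z j : ℝ) : WithBot ℝ) := (add_assoc _ _ _).symm
        _ ≤ mstar B k j + ((z j : ℝ) : WithBot ℝ) := add_le_add (hF k i j) le_rfl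
        _ ≤ ((h k : ℝ) : WithBot ℝ) := hz2 j k
    have := le_coe_inf' (hFne i) (fun k => h k - (mstar B k i).unbotD 0) hgoal
    simpa only [hz] using this
  -- the vector U (propagated from g)
  set U : Fin n → WithBot ℝ := fun i => Finset.univ.sup (fun k => mstar B i k + g k) with hU
  have hU1 : ∀ i, U i ≤ ((h i : ℝ) : WithBot ℝ) := by
    intro i
    simp only [hU]
    apply Finset.sup_le
    intro k _
    show ((Finset.range n).sup fun m => mpow B m i k) + g k ≤ _
    rw [sup_add _ _ _ ⟨0, Finset.mem_range.2 hn⟩]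
    apply Finset.sup_le
    intro m hm
    rcases Nat.eq_zero_or_pos m with rfl | hm1
    · by_cases hik : i = k
      · subst hik
        have : mpow B 0 i i + g i = g i := by simp [mpow]
        rw [this]
        exact hgh i
      · have : mpow B 0 i k = ⊥ := by simp [mpow, hik]
        rw [this, WithBot.bot_add]
        exact bot_le
    · have hmn : m ≤ n := Nat.le_of_lt (Finset.mem_range.1 hm)
      have hT := T2 m hm1 hmn i k
      have h2 : mpow A m i k + g k ≤ (((m : ℝ) * θ' - (-(h i)) : ℝ) : WithBot ℝ) :=
        cancel_right hT
      have h3 : mpow B m i k + g k = (mpow A m i k + g k) + (((m : ℝ) * (-θ') : ℝ) : WithBot ℝ) := by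
        rw [hBpow]; abel
      rw [h3]
      have h4 : ((m : ℝ) * θ' - (-(h i)) : ℝ) + ((m : ℝ) * (-θ')) = h i := by ring
      calc (mpow A m i k + g k) + (((m : ℝ) * (-θ') : ℝ) : WithBot ℝ)
          ≤ (((m : ℝ) * θ' - (-(h i)) : ℝ) : WithBot ℝ) + (((m : ℝ) * (-θ') : ℝ) : WithBot ℝ) :=
            add_le_add h2 le_rfl
        _ = ((h i : ℝ) : WithBot ℝ) := by rw [← WithBot.coe_add, h4]
  have hU2 : ∀ i, g i ≤ U i := by
    intro i
    calc g i = 0 + g i := (zero_add _).symm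
      _ ≤ mstar B i i + g i := add_le_add (hS0 i) le_rfl
      _ ≤ U i := Finset.le_sup (f := fun k => mstar B i k + g k) (Finset.mem_univ i)
  have hU3 : ∀ i j, B i j + U j ≤ U i := by
    intro i j
    simp only [hU]
    rw [add_sup _ _ _ (univ_ne hn)]
    apply Finset.sup_le
    intro k _
    calc B i j + (mstar B j k + g k)
        = (B i j + mstar B j k) + g k := (add_assoc _ _ _).symm
      _ ≤ mstar B i k + g k := add_le_add (hF' i j k) le_rfl
      _ ≤ Finset.univ.sup (fun k => mstar B i k + g k) :=
          Finset.le_sup (f := fun k => mstar B i k + g k) (Finset.mem_univ k)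
  -- the optimal vector
  set xv : Fin n → ℝ := fun i => ((((z i : ℝ) : WithBot ℝ) ⊔ U i)).unbotD 0 with hxv
  have hxW : ∀ i, ((xv i : ℝ) : WithBot ℝ) = ((z i : ℝ) : WithBot ℝ) ⊔ U i := by
    intro i
    simp only [hxv]
    apply coe_unbot'
    intro hb
    rw [sup_eq_bot_iff] at hb
    exact WithBot.coe_ne_bot hb.1
  have hfeas : ∀ i, g i ≤ ((xv i : ℝ) : WithBot ℝ) ∧ xv i ≤ h i := by
    intro i
    constructor
    · rw [hxW]; exact le_trans (hU2 i) le_sup_right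
    · have hle : ((xv i : ℝ) : WithBot ℝ) ≤ ((h i : ℝ) : WithBot ℝ) := by
        rw [hxW]
        exact sup_le (WithBot.coe_le_coe.2 (hz1 i)) (hU1 i)
      exact WithBot.coe_le_coe.1 hle
  have hinv : ∀ i j, B i j + ((xv j : ℝ) : WithBot ℝ) ≤ ((xv i : ℝ) : WithBot ℝ) := by
    intro i j
    rw [hxW, hxW, MaxPlusAux.add_max]
    apply sup_le
    · exact le_trans (hz3 i j) le_sup_left
    · exact le_trans (hU3 i j) le_sup_right
  have hGle : (Finset.univ.sup fun i => Finset.univ.sup fun j =>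
      A i j + ((xv j - xv i : ℝ) : WithBot ℝ)) ≤ θ := by
    rw [← hθ']
    apply Finset.sup_le
    intro i _
    apply Finset.sup_le
    intro j _
    have hij := hinv i j
    simp only [hB] at hij
    cases hA : A i j with
    | bot => rw [WithBot.bot_add]; exact bot_le
    | coe a =>
      rw [hA, ← WithBot.coe_add, ← WithBot.coe_add, WithBot.coe_le_coe] at hij
      rw [← WithBot.coe_add, WithBot.coe_le_coe]
      linarith
  -- lower bound for every feasible x
  have hlower : ∀ x : Fin n → ℝ, (∀ i, g i ≤ ((x i : ℝ) : WithBot ℝ) ∧ x i ≤ h i) →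
      θ ≤ Finset.univ.sup fun i => Finset.univ.sup fun j =>
        A i j + ((x j - x i : ℝ) : WithBot ℝ) := by
    intro x hx
    set GW : WithBot ℝ := Finset.univ.sup fun i => Finset.univ.sup fun j =>
      A i j + ((x j - x i : ℝ) : WithBot ℝ) with hGWd
    have hterm : ∀ i j, A i j + ((x j - x i : ℝ) : WithBot ℝ) ≤ GW := by
      intro i j
      exact le_trans
        (Finset.le_sup (f := fun j => A i j + ((x j - x i : ℝ) : WithBot ℝ)) (Finset.mem_univ j))
        (Finset.le_sup (f := fun i => Finset.univ.sup fun j =>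
          A i j + ((x j - x i : ℝ) : WithBot ℝ)) (Finset.mem_univ i))
    have hAex : ∃ k l : Fin n, A k l ≠ ⊥ := by
      by_contra hA
      push_neg at hA
      apply hlam
      unfold specRad
      rw [Finset.sup_eq_bot_iff]
      intro m hm
      obtain ⟨hm1, -⟩ := Finset.mem_Icc.1 hm
      obtain ⟨m', rfl⟩ := Nat.exists_eq_succ_of_ne_zero (by omega : m ≠ 0)
      have hin : (Finset.univ.sup fun i => mpow A (m' + 1) i i) = ⊥ := by
        rw [Finset.sup_eq_bot_iff]
        intro i _
        show (Finset.univ.sup fun k => mpow A m' i k + A k i) = ⊥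
        rw [Finset.sup_eq_bot_iff]
        intro k _
        rw [hA k i, WithBot.add_bot]
      rw [hin]
      rfl
    have hGWne : GW ≠ ⊥ := by
      obtain ⟨k, l, hkl⟩ := hAex
      intro hb
      have h1 := hterm k l
      rw [hb, le_bot_iff] at h1
      cases hA : A k l with
      | bot => exact hkl hA
      | coe a =>
        rw [hA, ← WithBot.coe_add] at h1
        exact WithBot.coe_ne_bot h1
    obtain ⟨c, hc⟩ := WithBot.ne_bot_iff_exists.1 hGWne
    have hA1 : ∀ i j : Fin n, A i j ≤ ((c - (x j - x i) : ℝ) : WithBot ℝ) := by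
      intro i j
      apply cancel_right
      rw [hc]
      exact hterm i j
    have L1 : ∀ m, 1 ≤ m → ∀ i j : Fin n,
        mpow A m i j ≤ (((m : ℝ) * c + x i - x j : ℝ) : WithBot ℝ) := by
      intro m hm
      induction m, hm using Nat.le_induction with
      | base =>
        intro i j
        rw [mpow_one]
        refine le_trans (hA1 i j) (WithBot.coe_le_coe.2 (by push_cast; linarith))
      | succ m hm ih =>
        intro i j
        show (Finset.univ.sup fun k => mpow A m i k + A k j) ≤ _
        apply Finset.sup_le
        intro k _
        calc mpow A m i k + A k j
            ≤ (((m : ℝ) * c + x i - x k : ℝ) : WithBot ℝ)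
                + ((c - (x j - x k) : ℝ) : WithBot ℝ) := add_le_add (ih i k) (hA1 k j)
          _ ≤ _ := by
              rw [← WithBot.coe_add]
              exact WithBot.coe_le_coe.2 (by push_cast; linarith)
    rw [← hc, hθdef]
    apply sup_le
    · show specRad A ≤ ((c : ℝ) : WithBot ℝ)
      unfold specRad
      apply Finset.sup_le
      intro m hm
      obtain ⟨hm1, hmn⟩ := Finset.mem_Icc.1 hm
      apply div_bound_of hm1
      apply Finset.sup_le
      intro i _
      refine le_trans (L1 m hm1 i i) (WithBot.coe_le_coe.2 (by linarith))
    · rw [hD]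
      apply Finset.sup_le
      intro m hm
      obtain ⟨hm1, hmn⟩ := Finset.mem_Icc.1 hm
      apply div_bound_of hm1
      apply Finset.sup_le
      intro i _
      apply Finset.sup_le
      intro j _
      have hgx : g j ≤ ((x j : ℝ) : WithBot ℝ) := (hx j).1
      have hhx : ((-(h i) : ℝ) : WithBot ℝ) ≤ ((-(x i) : ℝ) : WithBot ℝ) :=
        WithBot.coe_le_coe.2 (by linarith [(hx i).2])
      calc mpow A m i j + g j + ((-(h i) : ℝ) : WithBot ℝ)
          ≤ (((m : ℝ) * c + x i - x j : ℝ) : WithBot ℝ) + ((x j : ℝ) : WithBot ℝ)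
              + ((-(x i) : ℝ) : WithBot ℝ) := add_le_add (add_le_add (L1 m hm1 i j) hgx) hhx
        _ = (((m : ℝ) * c : ℝ) : WithBot ℝ) := by
            rw [← WithBot.coe_add, ← WithBot.coe_add]
            exact congrArg _ (by ring)
  constructor
  · exact ⟨xv, hfeas, le_antisymm hGle (hlower xv hfeas)⟩
  · rintro v ⟨x, hx, rfl⟩
    exact hlower x hx
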